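/- The Banach space c of real convergent sequences (with the supremum norm) is not a polyhedral space. -/

import Mathlib

open Filter Topology Metric
open scoped ENNReal

noncomputable section

/-- The space `ℓ₁` of absolutely summable real sequences. -/
abbrev EllOne : Type := lp (fun _ : ℕ => ℝ) 1

/-- The subspace of `ℓ∞` consisting of convergent real sequences. -/
def convSeq : Subspace ℝ (lp (fun _ : ℕ => ℝ) ∞) where
  carrier := {f | ∃ l : ℝ, Tendsto (fun n => f n) atTop (𝓝 l)}
  add_mem' := by
    rintro f g ⟨a, ha⟩ ⟨b, hb⟩
    exact ⟨a + b, by simpa [lp.coeFn_add] using ha.add hb⟩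
  zero_mem' := ⟨0, by simp [lp.coeFn_zero]⟩
  smul_mem' := by
    rintro c f ⟨a, ha⟩
    exact ⟨c * a, by simpa [lp.coeFn_smul] using ha.const_mul c⟩

/-- The Banach space `c` of convergent real sequences with the sup norm,
realized as a subspace of `ℓ∞`. -/
abbrev SpaceC : Type := ↥convSeq

/-- A normed space is polyhedral if the unit ball of each of its
finite-dimensional subspaces is a polytope (the convex hull of finitely many points). -/
def IsPolyhedralSpace (X : Type*) [NormedAddCommGroup X] [NormedSpace ℝ X] : Prop :=
  ∀ Y : Subspace ℝ X, FiniteDimensional ℝ Y →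
    ∃ F : Set Y, F.Finite ∧ closedBall (0 : Y) 1 = convexHull ℝ F

/-- The set of extreme points of the closed unit ball of the dual of `X`. -/
def extBdual (X : Type*) [NormedAddCommGroup X] [NormedSpace ℝ X] :
    Set (StrongDual ℝ X) :=
  Set.extremePoints ℝ (closedBall (0 : StrongDual ℝ X) 1)

/-- `D(x) = {x* ∈ S_{X*} : x*(x) = 1}`. -/
def Dface {X : Type*} [NormedAddCommGroup X] [NormedSpace ℝ X] (x : X) :
    Set (StrongDual ℝ X) :=
  {f | ‖f‖ = 1 ∧ f x = 1}

namespace SpaceCAux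
open Real

def θ (n : ℕ) : ℝ := (π/4) * (1/2)^n

lemma θ_pos (n : ℕ) : 0 < θ n := by
  have h := pi_pos
  have : (0:ℝ) < (1/2)^n := by positivity
  have : (0:ℝ) < π/4 := by linarith
  exact mul_pos this (by positivity)

lemma θ_le (n : ℕ) : θ n ≤ π/4 := by
  have h : (1/2 : ℝ)^n ≤ 1 := pow_le_one₀ (by norm_num) (by norm_num)
  have h2 : (0:ℝ) ≤ π/4 := by have := pi_pos; linarith
  calc θ n ≤ (π/4) * 1 := mul_le_mul_of_nonneg_left h h2
  _ = π/4 := mul_one _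

lemma θ_anti : StrictAnti θ := fun m n h => by
  have : (1/2:ℝ)^n < (1/2)^m := pow_lt_pow_right_of_lt_one₀ (by norm_num) (by norm_num) h
  have hπ : (0:ℝ) < π/4 := by have := pi_pos; linarith
  exact mul_lt_mul_of_pos_left this hπ

lemma θ_succ (n : ℕ) : θ (n+1) = θ n / 2 := by
  simp only [θ, pow_succ]; ring

lemma θ_tendsto : Tendsto θ atTop (𝓝 0) := by
  have := (tendsto_pow_atTop_nhds_zero_of_lt_one (by norm_num : (0:ℝ) ≤ 1/2)
    (by norm_num : (1/2:ℝ) < 1)).const_mul (π/4)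
  have h0 : (𝓝 (π/4 * 0 : ℝ)) = 𝓝 0 := by norm_num
  rw [← h0]
  exact this

def seqF : lp (fun _ : ℕ => ℝ) ∞ :=
  ⟨fun n => cos (θ n), memℓp_infty ⟨1, by rintro x ⟨n, rfl⟩; exact abs_cos_le_one _⟩⟩

def seqG : lp (fun _ : ℕ => ℝ) ∞ :=
  ⟨fun n => sin (θ n), memℓp_infty ⟨1, by rintro x ⟨n, rfl⟩; exact abs_sin_le_one _⟩⟩

lemma seqF_apply (n : ℕ) : seqF n = cos (θ n) := rfl
lemma seqG_apply (n : ℕ) : seqG n = sin (θ n) := rfl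

def Fc : SpaceC :=
  ⟨seqF, ⟨1, by
    have := (continuous_cos.tendsto 0).comp θ_tendsto
    simpa [Function.comp_def, seqF_apply] using this⟩⟩

def Gc : SpaceC :=
  ⟨seqG, ⟨0, by
    have := (continuous_sin.tendsto 0).comp θ_tendsto
    simpa [Function.comp_def, seqG_apply] using this⟩⟩

def Ysp : Subspace ℝ SpaceC := Submodule.span ℝ {Fc, Gc}

def coord (v : Ysp) (n : ℕ) : ℝ := ((v : SpaceC) : lp (fun _ : ℕ => ℝ) ∞) n

def el (a b : ℝ) : Ysp := ⟨a • Fc + b • Gc, Submodule.mem_span_pair.2 ⟨a, b, rfl⟩⟩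

lemma coord_el (a b : ℝ) (n : ℕ) :
    coord (el a b) n = a * cos (θ n) + b * sin (θ n) := by
  simp [coord, el, Fc, Gc, seqF_apply, seqG_apply, lp.coeFn_add, lp.coeFn_smul]
  rfl

lemma norm_eq (v : Ysp) : ‖v‖ = ‖((v : SpaceC) : lp (fun _ : ℕ => ℝ) ∞)‖ := rfl

lemma abs_coord_le_of_mem {v : Ysp} (h : v ∈ closedBall (0 : Ysp) 1) (n : ℕ) :
    |coord v n| ≤ 1 := by
  rw [mem_closedBall, dist_zero_right] at h
  have h2 := lp.norm_apply_le_norm (ENNReal.top_ne_zero) ((v : SpaceC) : lp (fun _ : ℕ => ℝ) ∞) n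
  rw [← norm_eq] at h2
  calc |coord v n| = ‖((v : SpaceC) : lp (fun _ : ℕ => ℝ) ∞) n‖ := rfl
  _ ≤ ‖v‖ := h2
  _ ≤ 1 := h

lemma mem_ball_of_coords {v : Ysp} (h : ∀ n, |coord v n| ≤ 1) :
    v ∈ closedBall (0 : Ysp) 1 := by
  rw [mem_closedBall, dist_zero_right]
  exact (norm_eq v).trans_le (lp.norm_le_of_forall_le zero_le_one h)


def φm (m : ℕ) : ℝ := 3 * θ m / 4
def δm (m : ℕ) : ℝ := θ m / 4

lemma δm_pos (m : ℕ) : 0 < δm m := by have := θ_pos m; simp [δm]; linarith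
lemma cos_δm_pos (m : ℕ) : 0 < cos (δm m) := by
  apply cos_pos_of_mem_Ioo
  constructor
  · have := θ_pos m; have := pi_pos; simp [δm]; linarith
  · have := θ_le m; have := θ_pos m; have := pi_pos; simp [δm]; linarith

def q (m : ℕ) : Ysp := el (cos (φm m) / cos (δm m)) (sin (φm m) / cos (δm m))

lemma coord_q (m n : ℕ) : coord (q m) n = cos (θ n - φm m) / cos (δm m) := by
  rw [q, coord_el, cos_sub]
  field_simp

lemma abs_arg_le (m n : ℕ) : |θ n - φm m| ≤ π/2 := by
  have h1 := θ_pos n; have h2 := θ_le n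
  have h3 := θ_pos m; have h4 := θ_le m
  have := pi_pos
  rw [abs_le]; constructor <;> (simp [φm]; try linarith) <;> linarith

lemma key_le (m n : ℕ) : δm m ≤ |θ n - φm m| := by
  rcases le_or_gt n m with h | h
  · have : θ m ≤ θ n := θ_anti.antitone h
    have : δm m ≤ θ n - φm m := by simp [δm, φm]; linarith
    exact this.trans (le_abs_self _)
  · have hn : θ n ≤ θ (m+1) := θ_anti.antitone h
    have hs := θ_succ m
    have : δm m ≤ -(θ n - φm m) := by simp [δm, φm]; linarith
    exact this.trans (neg_le_abs _)

lemma key_lt {m n : ℕ} (h1 : n ≠ m) (h2 : n ≠ m + 1) : δm m < |θ n - φm m| := by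
  rcases lt_or_ge n m with h | h
  · have : θ m < θ n := θ_anti h
    have : δm m < θ n - φm m := by simp [δm, φm]; linarith
    exact this.trans_le (le_abs_self _)
  · have h' : m + 1 < n := by omega
    have hn : θ n < θ (m+1) := θ_anti h'
    have hs := θ_succ m
    have : δm m < -(θ n - φm m) := by simp [δm, φm]; linarith
    exact this.trans_le (neg_le_abs _)

lemma coord_q_le (m n : ℕ) : coord (q m) n ≤ 1 := by
  rw [coord_q, div_le_one (cos_δm_pos m)]
  rw [← cos_abs (θ n - φm m)]
  apply cos_le_cos_of_nonneg_of_le_pi (le_of_lt (δm_pos m))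
  · have := abs_arg_le m n; have := pi_pos; linarith
  · exact key_le m n

lemma coord_q_lt {m n : ℕ} (h1 : n ≠ m) (h2 : n ≠ m + 1) : coord (q m) n < 1 := by
  rw [coord_q, div_lt_one (cos_δm_pos m)]
  rw [← cos_abs (θ n - φm m)]
  apply cos_lt_cos_of_nonneg_of_le_pi (le_of_lt (δm_pos m))
  · have := abs_arg_le m n; have := pi_pos; linarith
  · exact key_lt h1 h2

lemma coord_q_nonneg (m n : ℕ) : 0 ≤ coord (q m) n := by
  rw [coord_q]
  apply div_nonneg _ (le_of_lt (cos_δm_pos m))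
  apply cos_nonneg_of_mem_Icc
  have := abs_arg_le m n
  rw [abs_le] at this
  constructor <;> linarith [this.1, this.2]

lemma coord_q_self (m : ℕ) : coord (q m) m = 1 := by
  rw [coord_q]
  have : θ m - φm m = δm m := by simp [δm, φm]; ring
  rw [this, div_self (ne_of_gt (cos_δm_pos m))]

lemma coord_q_succ (m : ℕ) : coord (q m) (m+1) = 1 := by
  rw [coord_q]
  have : θ (m+1) - φm m = -δm m := by rw [θ_succ]; simp [δm, φm]; ring
  rw [this, cos_neg, div_self (ne_of_gt (cos_δm_pos m))]

lemma q_mem_ball (m : ℕ) : q m ∈ closedBall (0 : Ysp) 1 :=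
  mem_ball_of_coords fun n =>
    abs_le.2 ⟨by linarith [coord_q_nonneg m n], coord_q_le m n⟩

lemma unique_sol {α β a b : ℝ} (hα : 0 < α) (hαπ : α < π)
    (hd : 0 < α - β) (hdπ : α - β < π)
    (e1 : a * cos α + b * sin α = 0) (e2 : a * cos β + b * sin β = 0) :
    a = 0 ∧ b = 0 := by
  have hs : sin (α - β) ≠ 0 := ne_of_gt (sin_pos_of_pos_of_lt_pi hd hdπ)
  have hsα : sin α ≠ 0 := ne_of_gt (sin_pos_of_pos_of_lt_pi hα hαπ)
  rw [sin_sub] at hs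
  have ha : a * (sin α * cos β - cos α * sin β) = 0 := by
    have : a * (sin α * cos β - cos α * sin β)
        = sin α * (a * cos β + b * sin β) - sin β * (a * cos α + b * sin α) := by ring
    rw [this, e1, e2]; ring
  have ha' : a = 0 := by
    rcases mul_eq_zero.1 ha with h | h
    · exact h
    · exact absurd h hs
  refine ⟨ha', ?_⟩
  subst ha'
  simp only [zero_mul, zero_add] at e1
  rcases mul_eq_zero.1 e1 with h | h
  · exact h
  · exact absurd h hsα

lemma eq_q_of_coords {m : ℕ} {v : Ysp} (h1 : coord v m = 1) (h2 : coord v (m+1) = 1) :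
    v = q m := by
  obtain ⟨a, b, hab⟩ := Submodule.mem_span_pair.1 v.2
  have hv : v = el a b := Subtype.ext hab.symm
  subst hv
  rw [coord_el] at h1 h2
  set c := cos (φm m) / cos (δm m)
  set d := sin (φm m) / cos (δm m)
  have hq1 : c * cos (θ m) + d * sin (θ m) = 1 := by
    rw [← coord_el]; exact coord_q_self m
  have hq2 : c * cos (θ (m+1)) + d * sin (θ (m+1)) = 1 := by
    rw [← coord_el]; exact coord_q_succ m
  have hα : 0 < θ m := θ_pos m
  have hαπ : θ m < π := by have := θ_le m; have := pi_pos; linarith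
  have hd : 0 < θ m - θ (m+1) := sub_pos.2 (θ_anti (Nat.lt_succ_self m))
  have hdπ : θ m - θ (m+1) < π := by
    have := θ_pos (m+1); linarith
  obtain ⟨hA, hB⟩ := unique_sol hα hαπ hd hdπ
    (by linear_combination h1 - hq1 : (a - c) * cos (θ m) + (b - d) * sin (θ m) = 0)
    (by linear_combination h2 - hq2 : (a - c) * cos (θ (m+1)) + (b - d) * sin (θ (m+1)) = 0)
  have hac : a = c := by linarith
  have hbd : b = d := by linarith
  rw [q, hac, hbd]

lemma force {a b u w : ℝ} (ha : 0 < a) (hb : 0 < b) (hab : a + b = 1)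
    (hu : u ≤ 1) (hw : w ≤ 1) (h : a * u + b * w = 1) : u = 1 ∧ w = 1 := by
  constructor <;> nlinarith

lemma coord_add_smul (a b : ℝ) (x y : Ysp) (n : ℕ) :
    coord (a • x + b • y) n = a * coord x n + b * coord y n := by
  simp [coord, lp.coeFn_add, lp.coeFn_smul]
  rfl

lemma q_extremePoint (m : ℕ) :
    q m ∈ Set.extremePoints ℝ (closedBall (0 : Ysp) 1) := by
  rw [mem_extremePoints]
  refine ⟨q_mem_ball m, fun x₁ h₁ x₂ h₂ hseg => ?_⟩
  obtain ⟨a, b, ha, hb, hab, hx⟩ := hseg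
  have hc : ∀ n, a * coord x₁ n + b * coord x₂ n = coord (q m) n := fun n => by
    rw [← hx, coord_add_smul]
  have f1 := force ha hb hab ((abs_le.1 (abs_coord_le_of_mem h₁ m)).2)
    ((abs_le.1 (abs_coord_le_of_mem h₂ m)).2) (by rw [hc m, coord_q_self])
  have f2 := force ha hb hab ((abs_le.1 (abs_coord_le_of_mem h₁ (m+1))).2)
    ((abs_le.1 (abs_coord_le_of_mem h₂ (m+1))).2) (by rw [hc (m+1), coord_q_succ])
  exact ⟨eq_q_of_coords f1.1 f2.1, eq_q_of_coords f1.2 f2.2⟩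

lemma q_inj : Function.Injective (fun m : ℕ => q (2*m)) := by
  intro m k h
  have h' : q (2*m) = q (2*k) := h
  by_contra hne
  have h1 : coord (q (2*m)) (2*m) = 1 := coord_q_self _
  rw [h'] at h1
  have h2 : coord (q (2*k)) (2*m) < 1 :=
    coord_q_lt (by omega) (by omega)
  linarith

end SpaceCAux

set_option synthInstance.maxHeartbeats 1000000 in
/-- The space `c` of convergent real sequences is not polyhedral. -/
theorem spaceC_not_polyhedral : ¬ IsPolyhedralSpace SpaceC := by
  intro hpoly
  have hfd : FiniteDimensional ℝ SpaceCAux.Ysp :=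
    FiniteDimensional.span_of_finite ℝ ((Set.finite_singleton SpaceCAux.Gc).insert SpaceCAux.Fc)
  obtain ⟨F, hFfin, hball⟩ := hpoly SpaceCAux.Ysp hfd
  have hmem : ∀ m : ℕ, SpaceCAux.q (2*m) ∈ F := fun m => by
    have h := SpaceCAux.q_extremePoint (2*m)
    rw [hball] at h
    exact extremePoints_convexHull_subset h
  exact Set.infinite_of_injective_forall_mem SpaceCAux.q_inj hmem hFfin

end
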